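/- For all integers m and t, the identity (36t³ - 54t² + 27t + m - 3)³ + (36t³ - 54t² + 27t + m - 5)³ + 2(-36t³ + 54t² - 27t - m + 4)³ + (-6t + 3)³ = 6m + 3 holds. -/
import Mathlib


theorem stmt17 (m t : ℤ) :
    (36*t^3 - 54*t^2 + 27*t + m - 3)^3 + (36*t^3 - 54*t^2 + 27*t + m - 5)^3
    + 2*(-36*t^3 + 54*t^2 - 27*t - m + 4)^3 + (-6*t + 3)^3 = 6*m + 3 := by ring
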